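/- Let g > 3 be an integer, and let A be the (g+1)×(g+1) integer matrix with rows and columns indexed by 0, 1, …, g whose entries are: A₀₀ = g+2; A₀₁ = A₁₀ = A₀₂ = A₂₀ = 2; A₀ⱼ = Aⱼ₀ = 1 for 3 ≤ j ≤ g; Aⱼⱼ = 1 for 1 ≤ j ≤ g; A₁₂ = A₂₁ = 1; and all other entries equal to 0. Then the characteristic polynomial of A equals t²·(t − 1)^{g−3}·(t² − (g+5)·t + (2g+2)). -/

import Mathlib

set_option maxHeartbeats 1000000

open Polynomial Matrix

section AuxCharpolySpin

private def Umat (g : ℕ) : Matrix (Fin (g + 1)) (Fin 4) ℤ := fun i k =>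
  if (k : ℕ) = 0 then (if (i : ℕ) = 0 then 1 else 0)
  else if (k : ℕ) = 1 then (if (i : ℕ) = 1 then 1 else 0)
  else if (k : ℕ) = 2 then (if (i : ℕ) = 2 then 1 else 0)
  else (if 3 ≤ (i : ℕ) then 1 else 0)

private def Vmat (g : ℕ) : Matrix (Fin 4) (Fin (g + 1)) ℤ := fun k j =>
  if (k : ℕ) = 0 then
    (if (j : ℕ) = 0 then (g : ℤ) + 1 else if (j : ℕ) = 1 ∨ (j : ℕ) = 2 then 2 else 1)
  else if (k : ℕ) = 1 then (if (j : ℕ) = 0 then 2 else if (j : ℕ) = 2 then 1 else 0)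
  else if (k : ℕ) = 2 then (if (j : ℕ) = 0 then 2 else if (j : ℕ) = 1 then 1 else 0)
  else (if (j : ℕ) = 0 then 1 else 0)

private lemma sumA (g c : ℕ) (hc : c < g + 1) (f : Fin (g + 1) → ℤ) :
    (∑ x : Fin (g + 1), if (x : ℕ) = c then f x else 0) = f ⟨c, hc⟩ := by
  rw [Fintype.sum_eq_single (⟨c, hc⟩ : Fin (g + 1))]
  · simp
  · intro x hx
    have : (x : ℕ) ≠ c := fun h => hx (Fin.ext h)
    simp [this]

private lemma sum_tail_indicator (g : ℕ) (hg : 3 < g) :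
    (∑ j : Fin (g + 1), (if 3 ≤ (j : ℕ) then (1 : ℤ) else 0)) = (g : ℤ) - 2 := by
  have h1 := Fin.sum_univ_eq_sum_range (fun j => if 3 ≤ j then (1 : ℤ) else 0) (g + 1)
  rw [h1, Finset.range_eq_Ico,
    ← Finset.sum_Ico_consecutive _ (by omega : 0 ≤ 3) (by omega : 3 ≤ g + 1)]
  have h2 : (∑ j ∈ Finset.Ico 0 3, (if 3 ≤ j then (1 : ℤ) else 0)) = 0 := by decide
  have h3 : (∑ j ∈ Finset.Ico 3 (g + 1), (if 3 ≤ j then (1 : ℤ) else 0))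
      = ∑ _j ∈ Finset.Ico 3 (g + 1), (1 : ℤ) := by
    refine Finset.sum_congr rfl fun j hj => ?_
    rw [Finset.mem_Ico] at hj
    simp [hj.1]
  rw [h2, h3, Finset.sum_const, Nat.card_Ico, zero_add, nsmul_eq_mul, mul_one]
  push_cast
  omega

private lemma sumB (g : ℕ) (hg : 3 < g) (f : Fin (g + 1) → ℤ) (v : ℤ)
    (hf : ∀ x : Fin (g + 1), 3 ≤ (x : ℕ) → f x = v) :
    (∑ x : Fin (g + 1), if 3 ≤ (x : ℕ) then f x else 0) = ((g : ℤ) - 2) * v := by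
  have h : (∑ x : Fin (g + 1), if 3 ≤ (x : ℕ) then f x else 0)
      = ∑ x : Fin (g + 1), (if 3 ≤ (x : ℕ) then (1 : ℤ) else 0) * v := by
    refine Finset.sum_congr rfl fun x _ => ?_
    by_cases h : 3 ≤ (x : ℕ)
    · simp [h, hf x h]
    · simp [h]
  rw [h, ← Finset.sum_mul, sum_tail_indicator g hg]

private lemma map_smul_one_sub {R S : Type*} [CommRing R] [CommRing S] (f : R →+* S)
    {n : Type*} [Fintype n] [DecidableEq n] (x : R) (M : Matrix n n R) :
    (x • (1 : Matrix n n R) - M).map f = f x • (1 : Matrix n n S) - M.map f := by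
  ext i j
  by_cases h : i = j <;>
    simp [Matrix.map_apply, Matrix.sub_apply, Matrix.smul_apply, Matrix.one_apply, h]

private lemma det_smul_one_sub_mul_eq {K : Type*} [Field K] {n k : Type*} [Fintype n] [Fintype k]
    [DecidableEq n] [DecidableEq k]
    (x : K) (hx : x ≠ 0) (h : Fintype.card k ≤ Fintype.card n)
    (U : Matrix n k K) (V : Matrix k n K) :
    (x • (1 : Matrix n n K) - U * V).det
      = x ^ (Fintype.card n - Fintype.card k) * (x • (1 : Matrix k k K) - V * U).det := by
  have h1 : x • (1 : Matrix n n K) - U * V = x • ((1 : Matrix n n K) - U * (x⁻¹ • V)) := by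
    rw [smul_sub, Matrix.mul_smul, smul_smul, mul_inv_cancel₀ hx, one_smul]
  have h2 : x • (1 : Matrix k k K) - V * U = x • ((1 : Matrix k k K) - (x⁻¹ • V) * U) := by
    rw [smul_sub, Matrix.smul_mul, smul_smul, mul_inv_cancel₀ hx, one_smul]
  rw [h1, h2, Matrix.det_smul, Matrix.det_smul, Matrix.det_one_sub_mul_comm,
    ← mul_assoc, ← pow_add, Nat.sub_add_cancel h]

private lemma det4 (g : ℕ) :
    ((X - 1 : ℤ[X]) • (1 : Matrix (Fin 4) (Fin 4) ℤ[X])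
      - (!![(g:ℤ)+1, 2, 2, (g:ℤ)-2; 2, 0, 1, 0; 2, 1, 0, 0; 1, 0, 0, 0]).map C).det
    = X ^ 2 * (X ^ 2 - C ((g : ℤ) + 5) * X + C (2 * (g : ℤ) + 2)) := by
  have h : ((X - 1 : ℤ[X]) • (1 : Matrix (Fin 4) (Fin 4) ℤ[X])
      - (!![(g:ℤ)+1, 2, 2, (g:ℤ)-2; 2, 0, 1, 0; 2, 1, 0, 0; 1, 0, 0, 0]).map C)
      = !![X - 1 - C ((g:ℤ)+1), -2, -2, -C ((g:ℤ)-2);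
           -2, X - 1, -1, 0;
           -2, -1, X - 1, 0;
           -1, 0, 0, X - 1] := by
    ext i j
    fin_cases i <;> fin_cases j <;>
      simp [Matrix.one_apply, Matrix.map_apply, Matrix.vecHead, Matrix.vecTail]
  rw [h]
  simp [Matrix.det_succ_row_zero, Fin.sum_univ_succ, Matrix.det_fin_three,
    Matrix.vecHead, Matrix.vecTail, Fin.succAbove,
    (by decide : (Fin.succ 2 : Fin 4) = 3),
    (by decide : ((1 : Fin 4) < 3)), (by decide : (Fin.castSucc 2 : Fin 4) = 2)]
  ring

end AuxCharpolySpin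

/-- For `g > 3`, the characteristic polynomial of the `(g+1) × (g+1)` integer matrix with
`A₀₀ = g + 2`, `A₀₁ = A₁₀ = A₀₂ = A₂₀ = 2`, `A₀ⱼ = Aⱼ₀ = 1` for `3 ≤ j ≤ g`, `Aⱼⱼ = 1` for
`1 ≤ j ≤ g`, `A₁₂ = A₂₁ = 1`, and all other entries `0`, equals
`t² (t-1)^(g-3) (t² - (g+5) t + (2g+2))`. -/
theorem charpoly_non_hyperelliptic_even_spin_matrix
    (g : ℕ) (hg : 3 < g)
    (A : Matrix (Fin (g + 1)) (Fin (g + 1)) ℤ)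
    (hA : ∀ i j : Fin (g + 1), A i j =
      if (i : ℕ) = 0 ∧ (j : ℕ) = 0 then (g : ℤ) + 2
      else if ((i : ℕ) = 0 ∧ ((j : ℕ) = 1 ∨ (j : ℕ) = 2))
          ∨ ((j : ℕ) = 0 ∧ ((i : ℕ) = 1 ∨ (i : ℕ) = 2)) then 2
      else if (i : ℕ) = 0 ∨ (j : ℕ) = 0 then 1
      else if (i : ℕ) = (j : ℕ) then 1
      else if ((i : ℕ) = 1 ∧ (j : ℕ) = 2) ∨ ((i : ℕ) = 2 ∧ (j : ℕ) = 1) then 1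
      else 0) :
    A.charpoly
      = Polynomial.X ^ 2 * (Polynomial.X - 1) ^ (g - 3)
        * (Polynomial.X ^ 2 - Polynomial.C ((g : ℤ) + 5) * Polynomial.X
            + Polynomial.C (2 * (g : ℤ) + 2)) := by
  classical
  -- the product U * V, entrywise
  have hUV : ∀ i j : Fin (g + 1), (Umat g * Vmat g) i j =
      if (i : ℕ) = 0 then
        (if (j : ℕ) = 0 then (g : ℤ) + 1 else if (j : ℕ) = 1 ∨ (j : ℕ) = 2 then 2 else 1)
      else if (i : ℕ) = 1 then (if (j : ℕ) = 0 then 2 else if (j : ℕ) = 2 then 1 else 0)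
      else if (i : ℕ) = 2 then (if (j : ℕ) = 0 then 2 else if (j : ℕ) = 1 then 1 else 0)
      else (if (j : ℕ) = 0 then 1 else 0) := by
    intro i j
    rw [Matrix.mul_apply, Fin.sum_univ_four]
    rcases (by omega : (i : ℕ) = 0 ∨ (i : ℕ) = 1 ∨ (i : ℕ) = 2 ∨ 3 ≤ (i : ℕ)) with
      hi | hi | hi | hi <;>
      simp_all [Umat, Vmat, -Fin.val_eq_zero_iff] <;> omega
  -- rank-4 factorization: A = 1 + U * V
  have hAeq : A = 1 + Umat g * Vmat g := by
    ext i j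
    rw [hA, Matrix.add_apply, hUV i j, Matrix.one_apply]
    simp only [Fin.ext_iff]
    rcases (by omega : (i : ℕ) = 0 ∨ (i : ℕ) = 1 ∨ (i : ℕ) = 2 ∨ 3 ≤ (i : ℕ)) with
      hi | hi | hi | hi <;>
    rcases (by omega : (j : ℕ) = 0 ∨ (j : ℕ) = 1 ∨ (j : ℕ) = 2 ∨ 3 ≤ (j : ℕ)) with
      hj | hj | hj | hj <;>
      (try simp only [hi, hj]) <;> (try norm_num [-Fin.val_eq_zero_iff]) <;> (try split_ifs) <;> omega
  -- the 4×4 compression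
  have hVU : Vmat g * Umat g
      = !![(g:ℤ)+1, 2, 2, (g:ℤ)-2; 2, 0, 1, 0; 2, 1, 0, 0; 1, 0, 0, 0] := by
    ext k l
    rw [Matrix.mul_apply]
    fin_cases k <;> fin_cases l <;> simp only [Umat, Vmat] <;> norm_num [-Fin.val_eq_zero_iff]
    · rw [sumA g 0 (by omega)]; norm_num
    · rw [sumA g 1 (by omega)]; norm_num
    · rw [sumA g 2 (by omega)]; norm_num
    · rw [sumB g hg _ 1 (fun x hx => by split_ifs <;> omega)]; ring
    · rw [sumA g 0 (by omega)]; norm_num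
    · rw [sumA g 1 (by omega)]; norm_num
    · rw [sumA g 2 (by omega)]; norm_num
    · rw [sumB g hg _ 0 (fun x hx => by split_ifs <;> omega)]; ring
    · rw [sumA g 0 (by omega)]; norm_num
    · rw [sumA g 1 (by omega)]; norm_num
    · rw [sumA g 2 (by omega)]; norm_num
    · rw [sumB g hg _ 0 (fun x hx => by split_ifs <;> omega)]; ring
    · rw [sumA g 0 (by omega)]; norm_num
    · rw [sumA g 1 (by omega)]; norm_num
    · rw [sumA g 2 (by omega)]; norm_num
    · rw [sumB g hg _ 0 (fun x hx => by split_ifs <;> omega)]; ring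
  -- charmatrix in factored form
  have hchar : charmatrix A
      = (X - 1 : ℤ[X]) • 1 - (Umat g).map (C : ℤ →+* ℤ[X]) * (Vmat g).map (C : ℤ →+* ℤ[X]) := by
    have h1 : charmatrix A = (X : ℤ[X]) • 1 - A.map (C : ℤ →+* ℤ[X]) := by
      ext i j
      by_cases h : i = j
      · subst h
        simp [charmatrix_apply_eq, Matrix.smul_apply, Matrix.one_apply, Matrix.map_apply]
      · simp [charmatrix_apply_ne _ _ _ h, Matrix.smul_apply, Matrix.one_apply, h,
          Matrix.map_apply]
    have h2 : A.map (C : ℤ →+* ℤ[X]) = 1 + (Umat g * Vmat g).map (C : ℤ →+* ℤ[X]) := by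
      rw [hAeq]
      ext i j
      simp [Matrix.map_apply, Matrix.add_apply, Matrix.one_apply, Matrix.mul_apply,
        map_sum, apply_ite (C : ℤ → ℤ[X])]
    rw [h1, h2, Matrix.map_mul, sub_smul, one_smul, sub_sub]
  -- pass to the fraction field
  have hφ : Function.Injective (algebraMap ℤ[X] (FractionRing ℤ[X])) :=
    IsFractionRing.injective ℤ[X] (FractionRing ℤ[X])
  have hx0 : (X - 1 : ℤ[X]) ≠ 0 := by
    simpa using Polynomial.X_sub_C_ne_zero (1 : ℤ)
  have hx : algebraMap ℤ[X] (FractionRing ℤ[X]) (X - 1 : ℤ[X]) ≠ 0 :=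
    fun h => hx0 (hφ (by rw [h, map_zero]))
  have hcard : Fintype.card (Fin 4) ≤ Fintype.card (Fin (g + 1)) := by
    simp only [Fintype.card_fin]; omega
  have hdet : A.charpoly = (charmatrix A).det := rfl
  apply hφ
  rw [hdet, RingHom.map_det, hchar, RingHom.mapMatrix_apply, map_smul_one_sub,
    Matrix.map_mul, Matrix.map_map, Matrix.map_map, ← RingHom.coe_comp,
    det_smul_one_sub_mul_eq _ hx hcard, ← Matrix.map_mul, hVU, RingHom.coe_comp,
    ← Matrix.map_map, ← map_smul_one_sub, ← RingHom.mapMatrix_apply, ← RingHom.map_det, det4,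
    Fintype.card_fin, Fintype.card_fin, (by omega : g + 1 - 4 = g - 3),
    ← map_pow, ← _root_.map_mul]
  exact congrArg _ (by ring)
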